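/- Let h : [0,1] → [0,1] be an increasing homeomorphism. Suppose {η_n} and {η'_n} are sequences of nested finite partitions of [0,1] by closed intervals, both with bounded geometry and bounded nearby geometry with uniform constant C > 0 and exponentially decaying mesh, such that h maps each interval of η_n onto an interval of η'_n for every n. Then h is quasisymmetric: there is K = K(C) such that K⁻¹ ≤ (h(z)−h(x))/(h(y)−h(z)) ≤ K whenever z is the midpoint of [x,y]. -/

import Mathlib

open MeasureTheory

/-- Length of a subset of `ℝ`. -/
noncomputable def len (s : Set ℝ) : ℝ := (volume s).toReal

set_option maxHeartbeats 1000000 in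
/-- Abstract core of Theorem B: an increasing homeomorphism of `[0,1]` carrying one
sequence of nested partitions with bounded geometry, bounded nearby geometry and
exponentially decaying mesh onto another such sequence is quasisymmetric. -/
theorem stmt_14 (h : ℝ → ℝ) (C : ℝ) (hC : 0 < C)
    (hmono : StrictMonoOn h (Set.Icc 0 1))
    (hcont : ContinuousOn h (Set.Icc 0 1))
    (himg : h '' Set.Icc 0 1 = Set.Icc (0 : ℝ) 1)
    (η η' : ℕ → Finset (Set ℝ))
    (hIcc : ∀ n, ∀ I ∈ η n, ∃ c d : ℝ, c < d ∧ I = Set.Icc c d)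
    (hIcc' : ∀ n, ∀ I ∈ η' n, ∃ c d : ℝ, c < d ∧ I = Set.Icc c d)
    (hcover : ∀ n, 1 ≤ n → ⋃ I ∈ η n, I = Set.Icc (0 : ℝ) 1)
    (hcover' : ∀ n, 1 ≤ n → ⋃ I ∈ η' n, I = Set.Icc (0 : ℝ) 1)
    (hdisj : ∀ n, ∀ I ∈ η n, ∀ J ∈ η n, I ≠ J → interior I ∩ interior J = ∅)
    (hdisj' : ∀ n, ∀ I ∈ η' n, ∀ J ∈ η' n, I ≠ J → interior I ∩ interior J = ∅)
    (hnested : ∀ n, ∀ J ∈ η (n + 1), ∃ I ∈ η n, J ⊆ I)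
    (hnested' : ∀ n, ∀ J ∈ η' (n + 1), ∃ I ∈ η' n, J ⊆ I)
    -- bounded geometry with uniform constant C
    (hbg : ∀ n, ∀ J ∈ η (n + 1), ∀ I ∈ η n, J ⊆ I → C * len I ≤ len J)
    (hbg' : ∀ n, ∀ J ∈ η' (n + 1), ∀ I ∈ η' n, J ⊆ I → C * len I ≤ len J)
    -- bounded nearby geometry with uniform constant C
    (hnbg : ∀ n, ∀ I ∈ η n, ∀ J ∈ η n, I ≠ J → (I ∩ J).Nonempty → C * len I ≤ len J)
    (hnbg' : ∀ n, ∀ I ∈ η' n, ∀ J ∈ η' n, I ≠ J → (I ∩ J).Nonempty → C * len I ≤ len J)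
    -- exponentially decaying mesh
    (hmesh : ∃ L > (0 : ℝ), ∃ μ : ℝ, 0 < μ ∧ μ < 1 ∧
      ∀ n, ∀ I ∈ η n, len I ≤ L * μ ^ n)
    (hmesh' : ∃ L > (0 : ℝ), ∃ μ : ℝ, 0 < μ ∧ μ < 1 ∧
      ∀ n, ∀ I ∈ η' n, len I ≤ L * μ ^ n)
    -- h maps each interval of η n onto an interval of η' n
    (hresp : ∀ n, ∀ I ∈ η n, h '' I ∈ η' n) :
    ∃ K : ℝ, 0 < K ∧ ∀ x ∈ Set.Icc (0 : ℝ) 1, ∀ y ∈ Set.Icc (0 : ℝ) 1, x < y →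
      K⁻¹ ≤ (h ((x + y) / 2) - h x) / (h y - h ((x + y) / 2)) ∧
        (h ((x + y) / 2) - h x) / (h y - h ((x + y) / 2)) ≤ K := by
  classical
  obtain ⟨L, hL, μ, hμ0, hμ1, hLmesh⟩ := hmesh
  clear hmesh' hcover' hnested'
  -- ### basic facts about len
  have len_Icc : ∀ c d : ℝ, c ≤ d → len (Set.Icc c d) = d - c := by
    intro c d hcd
    simp [len, Real.volume_Icc, ENNReal.toReal_ofReal (sub_nonneg.mpr hcd)]
  have len_nonneg : ∀ s : Set ℝ, 0 ≤ len s := fun s => ENNReal.toReal_nonneg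
  have len_mono : ∀ (s : Set ℝ) (c d : ℝ), s ⊆ Set.Icc c d → len s ≤ len (Set.Icc c d) := by
    intro s c d hs
    have h1 : volume s ≤ volume (Set.Icc c d) := measure_mono hs
    have h2 : volume (Set.Icc c d) ≠ ⊤ := by simp [Real.volume_Icc]
    exact ENNReal.toReal_mono h2 h1
  have lenpos : ∀ n, ∀ I ∈ η n, 0 < len I := by
    intro n I hI
    obtain ⟨c, d, hcd, rfl⟩ := hIcc n I hI
    rw [len_Icc c d hcd.le]; linarith
  -- ### basic facts about h
  have h01 : ∀ u : ℝ, u ∈ Set.Icc (0:ℝ) 1 → h u ∈ Set.Icc (0:ℝ) 1 := by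
    intro u hu; rw [← himg]; exact ⟨u, hu, rfl⟩
  have hmonoLe : ∀ u v : ℝ, u ∈ Set.Icc (0:ℝ) 1 → v ∈ Set.Icc (0:ℝ) 1 → u ≤ v → h u ≤ h v := by
    intro u v hu hv huv
    rcases eq_or_lt_of_le huv with rfl | hlt
    · exact le_rfl
    · exact (hmono hu hv hlt).le
  have himgIcc : ∀ c d : ℝ, c ≤ d → Set.Icc c d ⊆ Set.Icc (0:ℝ) 1 →
      h '' Set.Icc c d = Set.Icc (h c) (h d) := by
    intro c d hcd hsub
    apply Set.Subset.antisymm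
    · rintro y ⟨u, hu, rfl⟩
      exact ⟨hmonoLe c u (hsub ⟨le_rfl, hcd⟩) (hsub hu) hu.1,
             hmonoLe u d (hsub hu) (hsub ⟨hcd, le_rfl⟩) hu.2⟩
    · exact intermediate_value_Icc hcd (hcont.mono hsub)
  have imginj : ∀ s t : Set ℝ, s ⊆ Set.Icc (0:ℝ) 1 → t ⊆ Set.Icc (0:ℝ) 1 →
      h '' s = h '' t → s = t := by
    have key : ∀ s t : Set ℝ, s ⊆ Set.Icc (0:ℝ) 1 → t ⊆ Set.Icc (0:ℝ) 1 →
        h '' s = h '' t → s ⊆ t := by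
      intro s t hs ht hEq p hp
      have hmem : h p ∈ h '' t := hEq ▸ ⟨p, hp, rfl⟩
      obtain ⟨q, hq, hqp⟩ := hmem
      rwa [← hmono.injOn (ht hq) (hs hp) hqp]
    intro s t hs ht hEq
    exact Set.Subset.antisymm (key s t hs ht hEq) (key t s ht hs hEq.symm)
  -- ### basic facts about the partitions
  have hsub01 : ∀ n, 1 ≤ n → ∀ I ∈ η n, I ⊆ Set.Icc (0:ℝ) 1 := by
    intro n hn I hI x hx
    rw [← hcover n hn]
    exact Set.mem_biUnion hI hx
  have exmem : ∀ n, 1 ≤ n → ∀ x ∈ Set.Icc (0:ℝ) 1, ∃ I ∈ η n, x ∈ I := by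
    intro n hn x hx
    have hx' : x ∈ ⋃ I ∈ η n, I := by rw [hcover n hn]; exact hx
    simpa using hx'
  have hC1 : C ≤ 1 := by
    obtain ⟨J, hJ, hJ0⟩ := exmem 2 (by norm_num) 0 ⟨le_rfl, zero_le_one⟩
    obtain ⟨P, hP, hJP⟩ := hnested 1 J hJ
    have h1 := hbg 1 J hJ P hP hJP
    have h2 : len J ≤ len P := by
      obtain ⟨c, d, hcd, rfl⟩ := hIcc 1 P hP
      exact len_mono _ _ _ hJP
    have h3 := lenpos 1 P hP
    nlinarith
  -- ### key structural lemma: a proper child loses a definite fraction of length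
  have lemS : ∀ k, 1 ≤ k → ∀ A ∈ η k, ∀ B ∈ η (k+1), B ⊆ A → B ≠ A →
      len B ≤ (1-C) * len A := by
    intro k hk A hA B hB hBA hne
    obtain ⟨a, b, hab, rfl⟩ := hIcc k A hA
    obtain ⟨a', b', hab', rfl⟩ := hIcc (k+1) B hB
    have hss := (Set.Icc_subset_Icc_iff hab'.le).mp hBA
    have hcase : a < a' ∨ b' < b := by
      by_contra hcon
      push_neg at hcon
      exact hne (by rw [le_antisymm hss.1 hcon.1, le_antisymm hcon.2 hss.2])
    have main : ∃ J ∈ η (k+1), J ⊆ Set.Icc a b ∧ J ≠ Set.Icc a' b' := by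
      have pick : ∀ lo hi : ℝ, a ≤ lo → lo < hi → hi ≤ b →
          Set.Ioo lo hi ∩ Set.Icc a' b' = ∅ →
          ∃ J ∈ η (k+1), J ⊆ Set.Icc a b ∧ J ≠ Set.Icc a' b' := by
        intro lo hi hlo hlohi hhi hdisjB
        have hFfin : (⋃ I ∈ η k, frontier I).Finite := by
          apply Set.Finite.biUnion (η k).finite_toSet
          intro I hI
          obtain ⟨c, d, hcd, rfl⟩ := hIcc k I hI
          rw [frontier_Icc hcd.le]
          exact (Set.finite_singleton d).insert c
        obtain ⟨x, hxIoo, hxF⟩ := ((Set.Ioo_infinite hlohi).diff hFfin).nonempty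
        have hx01 : x ∈ Set.Icc (0:ℝ) 1 :=
          hsub01 k hk _ hA ⟨le_trans hlo hxIoo.1.le, le_trans hxIoo.2.le hhi⟩
        obtain ⟨J, hJ, hxJ⟩ := exmem (k+1) (by omega) x hx01
        obtain ⟨P, hP, hJP⟩ := hnested k J hJ
        have hPA : P = Set.Icc a b := by
          by_contra hPA
          have hd := hdisj k P hP _ hA hPA
          have hxP : x ∈ interior P := by
            obtain ⟨c, d, hcd, rfl⟩ := hIcc k P hP
            have hxP' : x ∈ Set.Icc c d := hJP hxJ
            have hnf : x ∉ frontier (Set.Icc c d) := fun hmem =>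
              hxF (Set.mem_biUnion hP hmem)
            rw [frontier_Icc hcd.le] at hnf
            rw [interior_Icc]
            simp only [Set.mem_insert_iff, Set.mem_singleton_iff] at hnf
            push_neg at hnf
            exact ⟨lt_of_le_of_ne hxP'.1 (Ne.symm hnf.1), lt_of_le_of_ne hxP'.2 hnf.2⟩
          have hxA : x ∈ interior (Set.Icc a b) := by
            rw [interior_Icc]
            exact ⟨lt_of_le_of_lt hlo hxIoo.1, lt_of_lt_of_le hxIoo.2 hhi⟩
          have : x ∈ interior P ∩ interior (Set.Icc a b) := ⟨hxP, hxA⟩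
          rw [hd] at this
          exact this
        refine ⟨J, hJ, hPA ▸ hJP, ?_⟩
        intro hJB
        have hmem2 : x ∈ Set.Ioo lo hi ∩ Set.Icc a' b' := ⟨hxIoo, hJB ▸ hxJ⟩
        rw [hdisjB] at hmem2
        exact hmem2
      rcases hcase with h1 | h1
      · refine pick a a' le_rfl h1 (le_trans hab'.le hss.2) ?_
        apply Set.eq_empty_iff_forall_notMem.mpr
        rintro p ⟨hpo, hpB⟩
        exact absurd hpB.1 (not_le.mpr hpo.2)
      · refine pick b' b (le_trans hss.1 hab'.le) h1 le_rfl ?_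
        apply Set.eq_empty_iff_forall_notMem.mpr
        rintro p ⟨hpo, hpB⟩
        exact absurd hpB.2 (not_le.mpr hpo.1)
    obtain ⟨J, hJ, hJA, hJB⟩ := main
    obtain ⟨e, f, hef, rfl⟩ := hIcc (k+1) J hJ
    have hd := hdisj (k+1) _ hB _ hJ (Ne.symm hJB)
    rw [interior_Icc, interior_Icc] at hd
    have hJss := (Set.Icc_subset_Icc_iff hef.le).mp hJA
    have horder : f ≤ a' ∨ b' ≤ e := by
      by_contra hcon
      push_neg at hcon
      have h1 : max a' e < min b' f := max_lt (lt_min hab' hcon.1) (lt_min hcon.2 hef)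
      set q := (max a' e + min b' f)/2 with hq
      have hq1 : max a' e < q := by rw [hq]; linarith
      have hq2 : q < min b' f := by rw [hq]; linarith
      have hmem1 : q ∈ Set.Ioo a' b' :=
        ⟨lt_of_le_of_lt (le_max_left _ _) hq1, lt_of_lt_of_le hq2 (min_le_left _ _)⟩
      have hmem2 : q ∈ Set.Ioo e f :=
        ⟨lt_of_le_of_lt (le_max_right _ _) hq1, lt_of_lt_of_le hq2 (min_le_right _ _)⟩
      have : q ∈ Set.Ioo a' b' ∩ Set.Ioo e f := ⟨hmem1, hmem2⟩
      rw [hd] at this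
      exact this
    have hClen := hbg k _ hJ _ hA hJA
    rw [len_Icc _ _ hab.le, len_Icc _ _ hef.le] at hClen
    rw [len_Icc _ _ hab'.le, len_Icc _ _ hab.le]
    rcases horder with h1 | h1
    · have := hss.2; have := hJss.1; nlinarith
    · have := hss.1; have := hJss.2; nlinarith
  -- ### chain comparison
  have chain : ∀ s p, 1 ≤ p → ∀ W : ℕ → Set ℝ,
      (∀ k, p ≤ k → k ≤ p + s → W k ∈ η k) →
      (∀ k, p ≤ k → k < p + s → W (k+1) ⊆ W k) →
      ∃ m : ℕ, len (W (p+s)) ≤ (1-C)^m * len (W p) ∧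
        C^m * len (h '' (W p)) ≤ len (h '' (W (p+s))) := by
    intro s
    induction s with
    | zero =>
      intro p hp W hmem hsub
      exact ⟨0, by simp⟩
    | succ s ih =>
      intro p hp W hmem hsub
      obtain ⟨m, hlen, him⟩ := ih p hp W (fun k hk hk' => hmem k hk (by omega))
        (fun k hk hk' => hsub k hk (by omega))
      have hmemq : W (p+s) ∈ η (p+s) := hmem (p+s) (by omega) (by omega)
      have hmem1 : W (p+s+1) ∈ η (p+s+1) := hmem (p+s+1) (by omega) (by omega)
      by_cases heq : W (p+s+1) = W (p+s)
      · refine ⟨m, ?_, ?_⟩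
        · show len (W (p+s+1)) ≤ _
          rw [heq]; exact hlen
        · show _ ≤ len (h '' (W (p+s+1)))
          rw [heq]; exact him
      · have hsubJ : W (p+s+1) ⊆ W (p+s) := hsub (p+s) (by omega) (by omega)
        have hS := lemS (p+s) (by omega) (W (p+s)) hmemq (W (p+s+1)) hmem1 hsubJ heq
        have h1C : 0 ≤ 1 - C := by
          nlinarith [lenpos (p+s+1) _ hmem1, lenpos (p+s) _ hmemq]
        refine ⟨m+1, ?_, ?_⟩
        · show len (W (p+s+1)) ≤ _
          calc len (W (p+s+1)) ≤ (1-C) * len (W (p+s)) := hS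
            _ ≤ (1-C) * ((1-C)^m * len (W p)) := mul_le_mul_of_nonneg_left hlen h1C
            _ = (1-C)^(m+1) * len (W p) := by ring
        · show _ ≤ len (h '' (W (p+s+1)))
          have hb := hbg' (p+s) (h '' W (p+s+1)) (hresp _ _ hmem1)
            (h '' W (p+s)) (hresp _ _ hmemq) (Set.image_mono hsubJ)
          calc C^(m+1) * len (h '' W p) = C * (C^m * len (h '' W p)) := by ring
            _ ≤ C * len (h '' W (p+s)) := mul_le_mul_of_nonneg_left him hC.le
            _ ≤ len (h '' W (p+s+1)) := hb
  obtain ⟨D, hD, hDspec⟩ : ∃ D : ℝ, 0 < D ∧ ∀ p s, 1 ≤ p → ∀ W : ℕ → Set ℝ,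
      (∀ k, p ≤ k → k ≤ p + s → W k ∈ η k) →
      (∀ k, p ≤ k → k < p + s → W (k+1) ⊆ W k) →
      (C^3/3) * len (W p) ≤ len (W (p+s)) →
      D * len (h '' (W p)) ≤ len (h '' (W (p+s))) := by
    by_cases hC1' : C < 1
    · refine ⟨C ^ (Nat.floor (Real.log (C^3/3) / Real.log (1-C))), pow_pos hC _, ?_⟩
      intro p s hp W hmem hsub hrat
      obtain ⟨m, hlen, him⟩ := chain s p hp W hmem hsub
      have hWp : 0 < len (W p) := lenpos p _ (hmem p le_rfl (by omega))
      have hpow : (C^3/3) ≤ (1-C)^m := by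
        have h2 : (C^3/3) * len (W p) ≤ (1-C)^m * len (W p) := le_trans hrat hlen
        exact le_of_mul_le_mul_right h2 hWp
      have hms : m ≤ Nat.floor (Real.log (C^3/3) / Real.log (1-C)) := by
        have hc₀ : (0:ℝ) < C^3/3 := by positivity
        have hl1C : Real.log (1-C) < 0 := Real.log_neg (by linarith) (by linarith)
        have hlog : Real.log (C^3/3) ≤ m * Real.log (1-C) := by
          calc Real.log (C^3/3) ≤ Real.log ((1-C)^m) := Real.log_le_log hc₀ hpow
            _ = m * Real.log (1-C) := Real.log_pow (1-C) m
        have hmle : (m:ℝ) ≤ Real.log (C^3/3) / Real.log (1-C) := by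
          rw [le_div_iff_of_neg hl1C]
          exact hlog
        exact Nat.le_floor hmle
      have hCm : C ^ (Nat.floor (Real.log (C^3/3) / Real.log (1-C))) ≤ C^m :=
        pow_le_pow_of_le_one hC.le hC1'.le hms
      calc C ^ (Nat.floor (Real.log (C^3/3) / Real.log (1-C))) * len (h '' W p)
          ≤ C^m * len (h '' W p) := mul_le_mul_of_nonneg_right hCm (len_nonneg _)
        _ ≤ len (h '' W (p+s)) := him
    · refine ⟨1, one_pos, ?_⟩
      intro p s hp W hmem hsub hrat
      obtain ⟨m, hlen, him⟩ := chain s p hp W hmem hsub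
      have hWp : 0 < len (W p) := lenpos p _ (hmem p le_rfl (by omega))
      have hCeq : C = 1 := le_antisymm hC1 (not_lt.mp hC1')
      have hm0 : m = 0 := by
        by_contra hm
        have hz : (1-C)^m = 0 := by
          rw [hCeq]
          simp [zero_pow hm]
        rw [hz, zero_mul] at hlen
        have hpos : (0:ℝ) < C^3/3 := by positivity
        nlinarith
      rw [hm0] at him
      simpa using him
  -- ### existence of chains
  have chainex : ∀ N, ∀ I ∈ η N, ∃ W : ℕ → Set ℝ, W N = I ∧
      (∀ k, 1 ≤ k → k ≤ N → W k ∈ η k) ∧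
      (∀ k, 1 ≤ k → k + 1 ≤ N → W (k+1) ⊆ W k) := by
    intro N
    induction N with
    | zero =>
      intro I hI
      exact ⟨fun _ => I, rfl, fun k hk hk' => by omega, fun k hk hk' => by omega⟩
    | succ N ih =>
      intro I hI
      obtain ⟨P, hP, hIP⟩ := hnested N I hI
      obtain ⟨W', hW'N, hW'mem, hW'sub⟩ := ih P hP
      refine ⟨fun k => if k = N+1 then I else W' k, by simp, ?_, ?_⟩
      · intro k hk hkN
        by_cases hkN1 : k = N+1
        · simp only [if_pos hkN1]
          rw [hkN1]
          exact hI
        · simp only [if_neg hkN1]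
          exact hW'mem k hk (by omega)
      · intro k hk hkN1
        by_cases hke : k + 1 = N+1
        · have hkN : k = N := by omega
          simp only [if_pos hke, hkN, if_neg (show ¬ N = N+1 by omega), hW'N]
          exact hIP
        · simp only [if_neg hke, if_neg (show ¬ k = N+1 by omega)]
          exact hW'sub k hk (by omega)
  -- ### minimal length at level 1
  obtain ⟨m1, hm1, hm1spec⟩ : ∃ m1 : ℝ, 0 < m1 ∧ ∀ I ∈ η 1, m1 ≤ len I := by
    have hne : (η 1).Nonempty := by
      obtain ⟨I, hI, _⟩ := exmem 1 le_rfl 0 ⟨le_rfl, zero_le_one⟩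
      exact ⟨I, hI⟩
    obtain ⟨I₀, hI₀, hmin⟩ := (η 1).exists_min_image len hne
    exact ⟨len I₀, lenpos 1 I₀ hI₀, fun I hI => hmin I hI⟩
  set δ : ℝ := min (2*C*m1/3) (1/2) with hδdef
  have hδ : 0 < δ := by
    apply lt_min (by positivity) (by norm_num)
  have hδhalf : δ ≤ 1/2 := min_le_right _ _
  -- ### compactness: uniform lower bound for large gaps
  obtain ⟨ε₀, hε₀, hεspec⟩ : ∃ ε : ℝ, 0 < ε ∧ ∀ u v : ℝ, u ∈ Set.Icc (0:ℝ) 1 →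
      v ∈ Set.Icc (0:ℝ) 1 → δ ≤ v - u → ε ≤ h v - h u := by
    set S : Set (ℝ × ℝ) := {p | p.1 ∈ Set.Icc (0:ℝ) 1 ∧ p.2 ∈ Set.Icc (0:ℝ) 1 ∧ δ ≤ p.2 - p.1}
      with hSdef
    have hSne : S.Nonempty := by
      refine ⟨(0, δ), ⟨le_rfl, zero_le_one⟩, ⟨hδ.le, by linarith⟩, by simp⟩
    have hSclosed : IsClosed S := by
      apply IsClosed.inter (isClosed_Icc.preimage continuous_fst)
      apply IsClosed.inter (isClosed_Icc.preimage continuous_snd)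
      exact isClosed_le continuous_const (continuous_snd.sub continuous_fst)
    have hScomp : IsCompact S := by
      apply (isCompact_Icc.prod isCompact_Icc).of_isClosed_subset hSclosed
      rintro ⟨u, v⟩ ⟨hu, hv, _⟩
      exact ⟨hu, hv⟩
    have hmaps1 : ∀ p ∈ S, p.1 ∈ Set.Icc (0:ℝ) 1 := fun p hp => hp.1
    have hmaps2 : ∀ p ∈ S, p.2 ∈ Set.Icc (0:ℝ) 1 := fun p hp => hp.2.1
    have hf : ContinuousOn (fun p : ℝ × ℝ => h p.2 - h p.1) S := by
      apply ContinuousOn.sub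
      · exact hcont.comp continuous_snd.continuousOn hmaps2
      · exact hcont.comp continuous_fst.continuousOn hmaps1
    obtain ⟨p₀, hp₀S, hp₀min'⟩ := hScomp.exists_isMinOn hSne hf
    have hp₀min : ∀ p ∈ S, h p₀.2 - h p₀.1 ≤ h p.2 - h p.1 := fun p hp => hp₀min' hp
    refine ⟨h p₀.2 - h p₀.1, ?_, ?_⟩
    · have hlt : p₀.1 < p₀.2 := by
        have := hp₀S.2.2
        linarith
      exact sub_pos.mpr (hmono hp₀S.1 hp₀S.2.1 hlt)
    · intro u v hu hv hd
      exact hp₀min (u, v) ⟨hu, hv, hd⟩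
  -- ### neighbours
  have lnbr : ∀ n, 1 ≤ n → ∀ I ∈ η n, ∀ a b : ℝ, I = Set.Icc a b → a < b → 0 < a →
      ∃ la, la < a ∧ Set.Icc la a ∈ η n ∧ C * (b - a) ≤ a - la := by
    intro n hn I hI a b hEq hab ha0
    have ha1 : a ≤ 1 := by
      have hsub := hsub01 n hn I hI
      rw [hEq] at hsub
      exact (hsub ⟨le_rfl, hab.le⟩).2
    set S : Set (Set ℝ) := {J | J ∈ η n ∧ ∃ p ∈ J, p < a} with hSdef
    have hSfin : S.Finite := Set.Finite.subset (η n).finite_toSet (fun J hJ => hJ.1)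
    have hUclosed : IsClosed (⋃₀ S) := by
      rw [Set.sUnion_eq_biUnion]
      apply hSfin.isClosed_biUnion
      intro J hJ
      obtain ⟨c, d, hcd, rfl⟩ := hIcc n J hJ.1
      exact isClosed_Icc
    have hsubU : Set.Ico 0 a ⊆ ⋃₀ S := by
      intro p hp
      obtain ⟨J, hJ, hpJ⟩ := exmem n hn p ⟨hp.1, le_trans hp.2.le ha1⟩
      exact ⟨J, ⟨hJ, ⟨p, hpJ, hp.2⟩⟩, hpJ⟩
    have haU : a ∈ ⋃₀ S := by
      have h1 : a ∈ closure (Set.Ico (0:ℝ) a) := by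
        rw [closure_Ico (ne_of_lt ha0)]
        exact ⟨ha0.le, le_rfl⟩
      have h2 : closure (Set.Ico (0:ℝ) a) ⊆ ⋃₀ S := by
        rw [← hUclosed.closure_eq]
        exact closure_mono hsubU
      exact h2 h1
    obtain ⟨Lset, ⟨hLmem, p, hpL, hpa⟩, haL⟩ := haU
    obtain ⟨c, d, hcd, rfl⟩ := hIcc n Lset hLmem
    have hca : c < a := lt_of_le_of_lt hpL.1 hpa
    have hne : Set.Icc c d ≠ I := by
      rw [hEq]
      intro hEq2
      have hcmem : c ∈ Set.Icc a b := hEq2 ▸ Set.left_mem_Icc.mpr hcd.le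
      exact absurd hcmem.1 (not_le.mpr hca)
    have hda : d ≤ a := by
      by_contra hda
      push_neg at hda
      have hdisj1 := hdisj n _ hLmem I hI hne
      rw [hEq, interior_Icc, interior_Icc] at hdisj1
      set q := (a + min d b)/2 with hq
      have hmin : a < min d b := lt_min hda hab
      have hq1 : a < q := by rw [hq]; linarith
      have hq2 : q < min d b := by rw [hq]; linarith
      have hmem1 : q ∈ Set.Ioo c d := ⟨lt_trans hca hq1, lt_of_lt_of_le hq2 (min_le_left _ _)⟩
      have hmem2 : q ∈ Set.Ioo a b := ⟨hq1, lt_of_lt_of_le hq2 (min_le_right _ _)⟩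
      have : q ∈ Set.Ioo c d ∩ Set.Ioo a b := ⟨hmem1, hmem2⟩
      rw [hdisj1] at this
      exact this
    have hda' : d = a := le_antisymm hda haL.2
    have hnbg1 := hnbg n I hI (Set.Icc c d) hLmem (Ne.symm hne)
      ⟨a, hEq ▸ Set.left_mem_Icc.mpr hab.le, haL⟩
    rw [hEq, len_Icc _ _ hab.le, len_Icc c d hcd.le] at hnbg1
    rw [hda'] at hLmem hnbg1
    exact ⟨c, hca, hLmem, hnbg1⟩
  have rnbr : ∀ n, 1 ≤ n → ∀ I ∈ η n, ∀ a b : ℝ, I = Set.Icc a b → a < b → b < 1 →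
      ∃ rb, b < rb ∧ Set.Icc b rb ∈ η n ∧ C * (b - a) ≤ rb - b := by
    intro n hn I hI a b hEq hab hb1
    have hb0 : 0 ≤ b := by
      have hsub := hsub01 n hn I hI
      rw [hEq] at hsub
      exact (hsub ⟨hab.le, le_rfl⟩).1
    set S : Set (Set ℝ) := {J | J ∈ η n ∧ ∃ p ∈ J, b < p} with hSdef
    have hSfin : S.Finite := Set.Finite.subset (η n).finite_toSet (fun J hJ => hJ.1)
    have hUclosed : IsClosed (⋃₀ S) := by
      rw [Set.sUnion_eq_biUnion]
      apply hSfin.isClosed_biUnion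
      intro J hJ
      obtain ⟨c, d, hcd, rfl⟩ := hIcc n J hJ.1
      exact isClosed_Icc
    have hsubU : Set.Ioc b 1 ⊆ ⋃₀ S := by
      intro p hp
      obtain ⟨J, hJ, hpJ⟩ := exmem n hn p ⟨le_trans hb0 hp.1.le, hp.2⟩
      exact ⟨J, ⟨hJ, ⟨p, hpJ, hp.1⟩⟩, hpJ⟩
    have haU : b ∈ ⋃₀ S := by
      have h1 : b ∈ closure (Set.Ioc b (1:ℝ)) := by
        rw [closure_Ioc (ne_of_lt hb1)]
        exact ⟨le_rfl, hb1.le⟩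
      have h2 : closure (Set.Ioc b (1:ℝ)) ⊆ ⋃₀ S := by
        rw [← hUclosed.closure_eq]
        exact closure_mono hsubU
      exact h2 h1
    obtain ⟨Lset, ⟨hLmem, p, hpL, hpa⟩, haL⟩ := haU
    obtain ⟨c, d, hcd, rfl⟩ := hIcc n Lset hLmem
    have hca : b < d := lt_of_lt_of_le hpa hpL.2
    have hne : Set.Icc c d ≠ I := by
      rw [hEq]
      intro hEq2
      have hcmem : d ∈ Set.Icc a b := hEq2 ▸ Set.right_mem_Icc.mpr hcd.le
      exact absurd hcmem.2 (not_le.mpr hca)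
    have hda : b ≤ c := by
      by_contra hda
      push_neg at hda
      have hdisj1 := hdisj n _ hLmem I hI hne
      rw [hEq, interior_Icc, interior_Icc] at hdisj1
      set q := (max c a + b)/2 with hq
      have hmax : max c a < b := max_lt hda hab
      have hq1 : max c a < q := by rw [hq]; linarith
      have hq2 : q < b := by rw [hq]; linarith
      have hmem1 : q ∈ Set.Ioo c d :=
        ⟨lt_of_le_of_lt (le_max_left _ _) hq1, lt_trans hq2 hca⟩
      have hmem2 : q ∈ Set.Ioo a b := ⟨lt_of_le_of_lt (le_max_right _ _) hq1, hq2⟩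
      have : q ∈ Set.Ioo c d ∩ Set.Ioo a b := ⟨hmem1, hmem2⟩
      rw [hdisj1] at this
      exact this
    have hda' : c = b := le_antisymm haL.1 hda
    have hnbg1 := hnbg n I hI (Set.Icc c d) hLmem (Ne.symm hne)
      ⟨b, hEq ▸ Set.right_mem_Icc.mpr hab.le, haL⟩
    rw [hEq, len_Icc _ _ hab.le, len_Icc c d hcd.le] at hnbg1
    rw [hda'] at hLmem hnbg1
    exact ⟨d, hda' ▸ hcd, hLmem, by linarith⟩
  set Kc : ℝ := (1 + 2/C) / D with hKcdef
  have hKc : 0 < Kc := by positivity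
  -- ### the core estimate
  have core : ∀ w ∈ Set.Icc (0:ℝ) 1, ∀ t : ℝ, 0 < t → t ≤ δ →
      ∃ c' d' : ℝ, c' < d' ∧ w - t/2 ≤ c' ∧ d' ≤ w + t/2 ∧ Set.Icc c' d' ⊆ Set.Icc (0:ℝ) 1 ∧
        ∀ u v : ℝ, u ∈ Set.Icc (0:ℝ) 1 → v ∈ Set.Icc (0:ℝ) 1 →
          w - 3*t/2 ≤ u → v ≤ w + 3*t/2 → h v - h u ≤ Kc * (h d' - h c') := by
    intro w hw t ht hts
    have htδ1 : t ≤ 2*C*m1/3 := le_trans hts (min_le_left _ _)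
    have ht32 : 3*t/(2*C) ≤ m1 := by
      rw [div_le_iff₀ (by positivity)]
      nlinarith
    obtain ⟨N₀, hN₀⟩ := exists_pow_lt_of_lt_one (show (0:ℝ) < t/(2*L) by positivity) hμ1
    set N : ℕ := max N₀ 1 with hNdef
    have hN1 : 1 ≤ N := le_max_right _ _
    have hmeshN : ∀ I ∈ η N, len I < t/2 := by
      intro I hI
      have h1 : len I ≤ L * μ ^ N := hLmesh N I hI
      have h2 : μ ^ N ≤ μ ^ N₀ := pow_le_pow_of_le_one hμ0.le hμ1.le (le_max_left _ _)
      have h3 : L * μ ^ N ≤ L * μ ^ N₀ := mul_le_mul_of_nonneg_left h2 hL.le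
      have h4 : L * μ ^ N₀ < L * (t/(2*L)) := mul_lt_mul_of_pos_left hN₀ hL
      have h5 : L * (t/(2*L)) = t/2 := by
        field_simp
      linarith
    obtain ⟨I₀, hI₀, hwI₀⟩ := exmem N hN1 w hw
    obtain ⟨W, hWN, hWmem, hWsub⟩ := chainex N I₀ hI₀
    have hWsub' : ∀ k, 1 ≤ k → ∀ k', k ≤ k' → k' ≤ N → W k' ⊆ W k := by
      intro k hk
      refine Nat.le_induction ?_ ?_
      · intro _
        exact Set.Subset.refl _
      · intro n hn ih hnN
        exact Set.Subset.trans (hWsub n (by omega) (by omega)) (ih (by omega))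
    have hwW : ∀ k, 1 ≤ k → k ≤ N → w ∈ W k := by
      intro k hk hkN
      have hs : W N ⊆ W k := hWsub' k hk N hkN le_rfl
      exact hs (hWN.symm ▸ hwI₀)
    have hlenmono : ∀ k k', 1 ≤ k → k ≤ k' → k' ≤ N → len (W k') ≤ len (W k) := by
      intro k k' hk hkk' hk'N
      obtain ⟨c, d, hcd, hEq⟩ := hIcc k (W k) (hWmem k hk (le_trans hkk' hk'N))
      have hsubk := hWsub' k hk k' hkk' hk'N
      rw [hEq] at hsubk ⊢
      exact len_mono _ _ _ hsubk
    have htc : t/2 < 3*t/(2*C) := by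
      rw [div_lt_div_iff₀ (by norm_num) (by positivity)]
      nlinarith
    have hP1 : 3*t/(2*C) ≤ len (W 1) := le_trans ht32 (hm1spec (W 1) (hWmem 1 le_rfl hN1))
    obtain ⟨r, hr1, hrN, hPr, hrgr⟩ : ∃ r, 1 ≤ r ∧ r ≤ N ∧ 3*t/(2*C) ≤ len (W r) ∧
        ∀ m, r < m → m ≤ N → ¬(3*t/(2*C) ≤ len (W m)) :=
      ⟨Nat.findGreatest (fun k => 3*t/(2*C) ≤ len (W k)) N,
        Nat.le_findGreatest (P := fun k => 3*t/(2*C) ≤ len (W k)) hN1 hP1,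
        Nat.findGreatest_le N,
        Nat.findGreatest_spec (P := fun k => 3*t/(2*C) ≤ len (W k)) hN1 hP1,
        fun m hm hmN => Nat.findGreatest_is_greatest (P := fun k => 3*t/(2*C) ≤ len (W k)) hm hmN⟩
    have hrltN : r < N := by
      rcases lt_or_eq_of_le hrN with hlt | heq
      · exact hlt
      · exfalso
        have hmm := hmeshN (W N) (hWmem N hN1 le_rfl)
        rw [heq] at hPr
        linarith
    have hlenr1 : len (W (r+1)) < 3*t/(2*C) := by
      have := hrgr (r+1) (by omega) (by omega)
      linarith [not_le.mp this]
    have hWr1mem : W (r+1) ∈ η (r+1) := hWmem (r+1) (by omega) (by omega)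
    have hWrmem : W r ∈ η r := hWmem r hr1 hrN
    have hlenrup : len (W r) ≤ 3*t/(2*C*C) := by
      have hb := hbg r (W (r+1)) hWr1mem (W r) hWrmem (hWsub r hr1 (by omega))
      have hid : (3*t/(2*C))*(2*C) = 3*t := by field_simp
      have h2 : C * len (W r) < 3*t/(2*C) := lt_of_le_of_lt hb hlenr1
      have h3 : (C * len (W r)) * (2*C) < (3*t/(2*C))*(2*C) :=
        mul_lt_mul_of_pos_right h2 (by positivity)
      rw [hid] at h3
      rw [le_div_iff₀ (by positivity)]
      nlinarith [h3]
    have hjex : ∃ k, 1 ≤ k ∧ k ≤ N ∧ len (W k) ≤ t/2 :=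
      ⟨N, hN1, le_rfl, (hmeshN _ (hWmem N hN1 le_rfl)).le⟩
    obtain ⟨j, hjfull, hjmin⟩ : ∃ j, (1 ≤ j ∧ j ≤ N ∧ len (W j) ≤ t/2) ∧
        ∀ m, m < j → ¬(1 ≤ m ∧ m ≤ N ∧ len (W m) ≤ t/2) :=
      ⟨Nat.find hjex, Nat.find_spec hjex, fun m hm => Nat.find_min hjex hm⟩
    obtain ⟨hj1, hjN, hjlen⟩ := hjfull
    have hj2 : 2 ≤ j := by
      by_contra hj2'
      have hj1' : j = 1 := by omega
      rw [hj1'] at hjlen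
      linarith
    have hjm1len : t/2 < len (W (j-1)) := by
      have hmin := hjmin (j-1) (by omega)
      push_neg at hmin
      exact hmin (by omega) (by omega)
    have hjlow : C * (t/2) < len (W j) := by
      have hb := hbg (j-1) (W (j-1+1)) (hWmem (j-1+1) (by omega) (by omega))
        (W (j-1)) (hWmem (j-1) (by omega) (by omega)) (hWsub (j-1) (by omega) (by omega))
      have hjj : j - 1 + 1 = j := by omega
      rw [hjj] at hb
      nlinarith [hjm1len]
    have hrj : r < j := by
      by_contra hle
      push_neg at hle
      have := hlenmono j r hj1 hle hrN
      linarith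
    have hjmem : W j ∈ η j := hWmem j hj1 hjN
    have hcmp : D * len (h '' (W r)) ≤ len (h '' (W j)) := by
      have hmem2 : ∀ k, r ≤ k → k ≤ r + (j - r) → W k ∈ η k := by
        intro k hk hk'
        exact hWmem k (by omega) (by omega)
      have hsub2 : ∀ k, r ≤ k → k < r + (j - r) → W (k+1) ⊆ W k := by
        intro k hk hk'
        exact hWsub k (by omega) (by omega)
      have hjr : r + (j - r) = j := by omega
      have hrat : (C^3/3) * len (W r) ≤ len (W (r + (j - r))) := by
        rw [hjr]
        have h1 : (C^3/3) * len (W r) ≤ (C^3/3) * (3*t/(2*C*C)) :=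
          mul_le_mul_of_nonneg_left hlenrup (by positivity)
        have h2 : (C^3/3) * (3*t/(2*C*C)) = C * (t/2) := by
          field_simp
        linarith
      have hres := hDspec r (j - r) hr1 W hmem2 hsub2 hrat
      rwa [hjr] at hres
    obtain ⟨a, b, hab, hWrEq⟩ := hIcc r (W r) hWrmem
    obtain ⟨c', d', hcd', hWjEq⟩ := hIcc j (W j) hjmem
    have hwab : w ∈ Set.Icc a b := hWrEq ▸ hwW r hr1 hrN
    have hwcd : w ∈ Set.Icc c' d' := hWjEq ▸ hwW j hj1 hjN
    have hlenWr : len (W r) = b - a := by rw [hWrEq, len_Icc _ _ hab.le]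
    have hlenWj : len (W j) = d' - c' := by rw [hWjEq, len_Icc _ _ hcd'.le]
    have hWr01 : Set.Icc a b ⊆ Set.Icc (0:ℝ) 1 := by
      rw [← hWrEq]
      exact hsub01 r hr1 _ hWrmem
    have hWj01 : Set.Icc c' d' ⊆ Set.Icc (0:ℝ) 1 := by
      rw [← hWjEq]
      exact hsub01 j hj1 _ hjmem
    have himWr : h '' (W r) = Set.Icc (h a) (h b) := by
      rw [hWrEq]
      exact himgIcc a b hab.le hWr01
    have himWj : h '' (W j) = Set.Icc (h c') (h d') := by
      rw [hWjEq]
      exact himgIcc c' d' hcd'.le hWj01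
    have ha01 : a ∈ Set.Icc (0:ℝ) 1 := hWr01 (Set.left_mem_Icc.mpr hab.le)
    have hb01 : b ∈ Set.Icc (0:ℝ) 1 := hWr01 (Set.right_mem_Icc.mpr hab.le)
    have hlen'Wr : len (h '' (W r)) = h b - h a := by
      rw [himWr, len_Icc _ _ (hmonoLe a b ha01 hb01 hab.le)]
    have hc'01 : c' ∈ Set.Icc (0:ℝ) 1 := hWj01 (Set.left_mem_Icc.mpr hcd'.le)
    have hd'01 : d' ∈ Set.Icc (0:ℝ) 1 := hWj01 (Set.right_mem_Icc.mpr hcd'.le)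
    have hlen'Wj : len (h '' (W j)) = h d' - h c' := by
      rw [himWj, len_Icc _ _ (hmonoLe c' d' hc'01 hd'01 hcd'.le)]
    have hlenWjt : d' - c' ≤ t/2 := by
      rw [← hlenWj]
      exact hjlen
    refine ⟨c', d', hcd', ?_, ?_, hWj01, ?_⟩
    · linarith [hwcd.2]
    · linarith [hwcd.1]
    intro u v hu hv huw hvw
    have hba' : 0 < h b - h a := sub_pos.mpr (hmono ha01 hb01 hab)
    have hlenWrlb : 3*t/(2*C) ≤ b - a := by
      rw [← hlenWr]
      exact hPr
    have h3t2 : 3*t/2 ≤ C*(b-a) := by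
      have hmm : C * (3*t/(2*C)) ≤ C * (b - a) := mul_le_mul_of_nonneg_left hlenWrlb hC.le
      have hCt : C * (3*t/(2*C)) = 3*t/2 := by
        field_simp
      linarith
    have A2 : h a - h u ≤ (1/C) * (h b - h a) := by
      rcases le_or_gt a u with hau | hua
      · have := hmonoLe a u ha01 hu hau
        have hrhs : 0 ≤ (1/C) * (h b - h a) := by positivity
        linarith
      · have ha0 : 0 < a := lt_of_le_of_lt hu.1 hua
        obtain ⟨la, hla, hLmem, hLlen⟩ := lnbr r hr1 (W r) hWrmem a b hWrEq hab ha0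
        have hL01 : Set.Icc la a ⊆ Set.Icc (0:ℝ) 1 := hsub01 r hr1 _ hLmem
        have hla01 : la ∈ Set.Icc (0:ℝ) 1 := hL01 (Set.left_mem_Icc.mpr hla.le)
        have hula : la ≤ u := by
          have haw : a ≤ w := hwab.1
          linarith
        have hne : Set.Icc la a ≠ W r := by
          rw [hWrEq]
          intro hEq
          have hmm : la ∈ Set.Icc a b := hEq ▸ Set.left_mem_Icc.mpr hla.le
          linarith [hmm.1]
        have hne' : h '' Set.Icc la a ≠ h '' (W r) := by
          intro hEq
          exact hne (imginj _ _ hL01 (hWrEq ▸ hWr01) hEq)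
        have hint : ((h '' Set.Icc la a) ∩ (h '' (W r))).Nonempty :=
          ⟨h a, ⟨a, Set.right_mem_Icc.mpr hla.le, rfl⟩,
            ⟨a, hWrEq ▸ Set.left_mem_Icc.mpr hab.le, rfl⟩⟩
        have hnb := hnbg' r _ (hresp r _ hLmem) _ (hresp r _ hWrmem) hne' hint
        have hlenL : len (h '' Set.Icc la a) = h a - h la := by
          rw [himgIcc la a hla.le hL01, len_Icc _ _ (hmonoLe la a hla01 ha01 hla.le)]
        rw [hlenL, hlen'Wr] at hnb
        have hu' : h la ≤ h u := hmonoLe la u hla01 hu hula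
        have h6 : h a - h la ≤ (1/C) * (h b - h a) := by
          rw [one_div, inv_mul_eq_div, le_div_iff₀ hC]
          linarith [hnb]
        linarith
    have A1 : h v - h b ≤ (1/C) * (h b - h a) := by
      rcases le_or_gt v b with hvb | hbv
      · have := hmonoLe v b hv hb01 hvb
        have hrhs : 0 ≤ (1/C) * (h b - h a) := by positivity
        linarith
      · have hb1 : b < 1 := lt_of_lt_of_le hbv hv.2
        obtain ⟨rb, hrb, hRmem, hRlen⟩ := rnbr r hr1 (W r) hWrmem a b hWrEq hab hb1
        have hR01 : Set.Icc b rb ⊆ Set.Icc (0:ℝ) 1 := hsub01 r hr1 _ hRmem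
        have hrb01 : rb ∈ Set.Icc (0:ℝ) 1 := hR01 (Set.right_mem_Icc.mpr hrb.le)
        have hvrb : v ≤ rb := by
          have hbw : w ≤ b := hwab.2
          linarith
        have hne : Set.Icc b rb ≠ W r := by
          rw [hWrEq]
          intro hEq
          have hmm : rb ∈ Set.Icc a b := hEq ▸ Set.right_mem_Icc.mpr hrb.le
          linarith [hmm.2]
        have hne' : h '' Set.Icc b rb ≠ h '' (W r) := by
          intro hEq
          exact hne (imginj _ _ hR01 (hWrEq ▸ hWr01) hEq)
        have hint : ((h '' Set.Icc b rb) ∩ (h '' (W r))).Nonempty :=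
          ⟨h b, ⟨b, Set.left_mem_Icc.mpr hrb.le, rfl⟩,
            ⟨b, hWrEq ▸ Set.right_mem_Icc.mpr hab.le, rfl⟩⟩
        have hnb := hnbg' r _ (hresp r _ hRmem) _ (hresp r _ hWrmem) hne' hint
        have hlenR : len (h '' Set.Icc b rb) = h rb - h b := by
          rw [himgIcc b rb hrb.le hR01, len_Icc _ _ (hmonoLe b rb hb01 hrb01 hrb.le)]
        rw [hlenR, hlen'Wr] at hnb
        have hv' : h v ≤ h rb := hmonoLe v rb hv hrb01 hvrb
        have h6 : h rb - h b ≤ (1/C) * (h b - h a) := by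
          rw [one_div, inv_mul_eq_div, le_div_iff₀ hC]
          linarith [hnb]
        linarith
    have hcomb : h v - h u ≤ (1 + 2/C) * (h b - h a) := by
      have hring : (1 + 2/C) * (h b - h a) =
          (1/C)*(h b - h a) + (h b - h a) + (1/C)*(h b - h a) := by
        ring
      linarith [A1, A2]
    have hDX : D * (h b - h a) ≤ h d' - h c' := by
      rw [← hlen'Wr, ← hlen'Wj]
      exact hcmp
    have hfin : (1 + 2/C) * (h b - h a) ≤ Kc * (h d' - h c') := by
      have h7 : ((1+2/C)/D) * (D * (h b - h a)) ≤ ((1+2/C)/D) * (h d' - h c') :=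
        mul_le_mul_of_nonneg_left hDX (by positivity)
      have h8 : ((1+2/C)/D) * (D * (h b - h a)) = (1+2/C) * (h b - h a) := by
        field_simp
      rw [hKcdef]
      linarith
    linarith
  -- ### conclusion
  set K : ℝ := max Kc (1/ε₀) with hKdef
  have hK : 0 < K := lt_of_lt_of_le hKc (le_max_left _ _)
  refine ⟨K, hK, ?_⟩
  intro x hx y hy hxy
  have hz01 : (x+y)/2 ∈ Set.Icc (0:ℝ) 1 := by
    constructor
    · have := hx.1; have := hy.1; linarith
    · have := hx.2; have := hy.2; linarith
  set z : ℝ := (x + y)/2 with hzdef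
  set t : ℝ := (y - x)/2 with htdef
  have ht : 0 < t := by rw [htdef]; linarith
  have hxzt : x = z - t := by rw [hzdef, htdef]; ring
  have hyzt : y = z + t := by rw [hzdef, htdef]; ring
  have hxz' : x < z := by rw [hxzt]; linarith
  have hzy' : z < y := by rw [hyzt]; linarith
  have hNpos : 0 < h z - h x := sub_pos.mpr (hmono hx hz01 hxz')
  have hDpos : 0 < h y - h z := sub_pos.mpr (hmono hz01 hy hzy')
  have ht12 : t ≤ 1/2 := by
    have := hx.1; have := hy.2; rw [htdef]; linarith
  have B1 : h y - h z ≤ K * (h z - h x) := by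
    rcases le_or_gt t δ with hts | htl
    · have hw01 : z - t/2 ∈ Set.Icc (0:ℝ) 1 := by
        constructor
        · have h0 := hx.1
          rw [hxzt] at h0
          linarith
        · have h1 := hz01.2
          linarith
      obtain ⟨c', d', hcd', hc'lb, hd'ub, hsubcd, hcore⟩ := core (z - t/2) hw01 t ht hts
      have hyx : h y - h x ≤ Kc * (h d' - h c') := by
        apply hcore x y hx hy
        · rw [hxzt]; linarith
        · rw [hyzt]; linarith
      have hc'01 : c' ∈ Set.Icc (0:ℝ) 1 := hsubcd (Set.left_mem_Icc.mpr hcd'.le)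
      have hd'01 : d' ∈ Set.Icc (0:ℝ) 1 := hsubcd (Set.right_mem_Icc.mpr hcd'.le)
      have hxc' : x ≤ c' := by rw [hxzt]; linarith
      have hd'z : d' ≤ z := by linarith
      have h2 : h d' - h c' ≤ h z - h x := by
        have e1 := hmonoLe x c' hx hc'01 hxc'
        have e2 := hmonoLe d' z hd'01 hz01 hd'z
        linarith
      have h3 : h x ≤ h z := hmonoLe x z hx hz01 hxz'.le
      have h5 : Kc * (h d' - h c') ≤ Kc * (h z - h x) := mul_le_mul_of_nonneg_left h2 hKc.le
      have h6 : Kc * (h z - h x) ≤ K * (h z - h x) :=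
        mul_le_mul_of_nonneg_right (le_max_left _ _) hNpos.le
      linarith
    · have hy1 := (h01 y hy).2
      have hz0 := (h01 z hz01).1
      have hε : ε₀ ≤ h z - h x := by
        apply hεspec x z hx hz01
        have hzx : z - x = t := by rw [hxzt]; ring
        linarith
      have h1 : h y - h z ≤ 1 := by linarith
      have h2 : 1 ≤ (1/ε₀) * (h z - h x) := by
        rw [one_div, inv_mul_eq_div, le_div_iff₀ hε₀]
        linarith
      have h3 : (1/ε₀) * (h z - h x) ≤ K * (h z - h x) :=
        mul_le_mul_of_nonneg_right (le_max_right _ _) hNpos.le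
      linarith
  have B2 : h z - h x ≤ K * (h y - h z) := by
    rcases le_or_gt t δ with hts | htl
    · have hw01 : z + t/2 ∈ Set.Icc (0:ℝ) 1 := by
        constructor
        · have h0 := hz01.1
          linarith
        · have h1 := hy.2
          rw [hyzt] at h1
          linarith
      obtain ⟨c', d', hcd', hc'lb, hd'ub, hsubcd, hcore⟩ := core (z + t/2) hw01 t ht hts
      have hyx : h y - h x ≤ Kc * (h d' - h c') := by
        apply hcore x y hx hy
        · rw [hxzt]; linarith
        · rw [hyzt]; linarith
      have hc'01 : c' ∈ Set.Icc (0:ℝ) 1 := hsubcd (Set.left_mem_Icc.mpr hcd'.le)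
      have hd'01 : d' ∈ Set.Icc (0:ℝ) 1 := hsubcd (Set.right_mem_Icc.mpr hcd'.le)
      have hzc' : z ≤ c' := by linarith
      have hd'y : d' ≤ y := by rw [hyzt]; linarith
      have h2 : h d' - h c' ≤ h y - h z := by
        have e1 := hmonoLe z c' hz01 hc'01 hzc'
        have e2 := hmonoLe d' y hd'01 hy hd'y
        linarith
      have h3 : h z ≤ h y := hmonoLe z y hz01 hy hzy'.le
      have h5 : Kc * (h d' - h c') ≤ Kc * (h y - h z) := mul_le_mul_of_nonneg_left h2 hKc.le
      have h6 : Kc * (h y - h z) ≤ K * (h y - h z) :=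
        mul_le_mul_of_nonneg_right (le_max_left _ _) hDpos.le
      have h4 : h x ≤ h z := hmonoLe x z hx hz01 hxz'.le
      linarith
    · have hz1 := (h01 z hz01).2
      have hx0 := (h01 x hx).1
      have hε : ε₀ ≤ h y - h z := by
        apply hεspec z y hz01 hy
        have hzy2 : y - z = t := by rw [hyzt]; ring
        linarith
      have h1 : h z - h x ≤ 1 := by linarith
      have h2 : 1 ≤ (1/ε₀) * (h y - h z) := by
        rw [one_div, inv_mul_eq_div, le_div_iff₀ hε₀]
        linarith
      have h3 : (1/ε₀) * (h y - h z) ≤ K * (h y - h z) :=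
        mul_le_mul_of_nonneg_right (le_max_right _ _) hDpos.le
      linarith
  constructor
  · rw [le_div_iff₀ hDpos]
    have h1 : K⁻¹ * (h y - h z) ≤ K⁻¹ * (K * (h z - h x)) :=
      mul_le_mul_of_nonneg_left B1 (by positivity)
    calc K⁻¹ * (h y - h z) ≤ K⁻¹ * (K * (h z - h x)) := h1
      _ = (h z - h x) := by field_simp
  · rw [div_le_iff₀ hDpos]
    linarith [B2, mul_comm K (h y - h z)]
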